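/- For any real q ≥ 1 and any finite subset T of a metric space with |T| = k even, k ≥ 2, one has cl_q(T) ≤ (2^q + 1) · bp_q(T). -/

import Mathlib

open Finset

private lemma key_rpow (a b : ℝ) (ha : 0 ≤ a) (hb : 0 ≤ b) {q : ℝ} (hq : 1 ≤ q) :
    (a + b) ^ q ≤ 2 ^ (q - 1) * (a ^ q + b ^ q) := by
  have h := NNReal.rpow_add_le_mul_rpow_add_rpow ⟨a, ha⟩ ⟨b, hb⟩ hq
  have := NNReal.coe_le_coe.2 h
  push_cast at this
  exact this

private lemma block {X : Type*} [MetricSpace X] {q : ℝ} (hq : 1 ≤ q)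
    (A B : Finset X) (h : A.card = B.card) (hB : B.Nonempty) :
    ∑ u ∈ A, ∑ v ∈ A, dist u v ^ q ≤ 2 ^ q * ∑ a ∈ A, ∑ b ∈ B, dist a b ^ q := by
  have hm : (0 : ℝ) < B.card := by exact_mod_cast hB.card_pos
  have step : ∀ u ∈ A, ∀ v ∈ A, (B.card : ℝ) * dist u v ^ q
      ≤ 2 ^ (q - 1) * ∑ r ∈ B, (dist u r ^ q + dist v r ^ q) := by
    intro u _ v _
    rw [Finset.mul_sum]
    calc (B.card : ℝ) * dist u v ^ q = ∑ _r ∈ B, dist u v ^ q := by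
          rw [Finset.sum_const, nsmul_eq_mul]
      _ ≤ ∑ r ∈ B, 2 ^ (q - 1) * (dist u r ^ q + dist v r ^ q) := by
          apply Finset.sum_le_sum
          intro r _
          calc dist u v ^ q ≤ (dist u r + dist v r) ^ q := by
                apply Real.rpow_le_rpow dist_nonneg _ (by linarith)
                rw [dist_comm v r]
                exact dist_triangle u r v
            _ ≤ 2 ^ (q - 1) * (dist u r ^ q + dist v r ^ q) :=
                key_rpow _ _ dist_nonneg dist_nonneg hq
  have hsum : (B.card : ℝ) * ∑ u ∈ A, ∑ v ∈ A, dist u v ^ q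
      ≤ 2 ^ (q - 1) * ((B.card : ℝ) * ∑ a ∈ A, ∑ b ∈ B, dist a b ^ q
          + (B.card : ℝ) * ∑ a ∈ A, ∑ b ∈ B, dist a b ^ q) := by
    have hmain : ∑ u ∈ A, ∑ v ∈ A, ((B.card : ℝ) * dist u v ^ q)
        ≤ ∑ u ∈ A, ∑ v ∈ A, (2 ^ (q - 1) * ∑ r ∈ B, (dist u r ^ q + dist v r ^ q)) :=
      Finset.sum_le_sum fun u hu => Finset.sum_le_sum fun v hv => step u hu v hv
    calc (B.card : ℝ) * ∑ u ∈ A, ∑ v ∈ A, dist u v ^ q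
        = ∑ u ∈ A, ∑ v ∈ A, ((B.card : ℝ) * dist u v ^ q) := by
          simp [Finset.mul_sum]
      _ ≤ ∑ u ∈ A, ∑ v ∈ A, (2 ^ (q - 1) * ∑ r ∈ B, (dist u r ^ q + dist v r ^ q)) := hmain
      _ = 2 ^ (q - 1) * ((B.card : ℝ) * ∑ a ∈ A, ∑ b ∈ B, dist a b ^ q
          + (B.card : ℝ) * ∑ a ∈ A, ∑ b ∈ B, dist a b ^ q) := by
          simp only [Finset.sum_add_distrib, ← Finset.mul_sum]
          have c1 : ∀ g : X → ℝ, ∑ x ∈ A, ∑ _y ∈ A, g x = (B.card : ℝ) * ∑ x ∈ A, g x := by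
            intro g
            rw [show ∑ x ∈ A, ∑ _y ∈ A, g x = ∑ x ∈ A, (A.card : ℝ) * g x from
              Finset.sum_congr rfl fun x _ => by rw [Finset.sum_const, nsmul_eq_mul],
              ← Finset.mul_sum, h]
          congr 1
          congr 1
          · exact c1 _
          · rw [Finset.sum_comm (s := A) (t := A)]
            exact c1 _
  set S := ∑ a ∈ A, ∑ b ∈ B, dist a b ^ q with hS
  set SA := ∑ u ∈ A, ∑ v ∈ A, dist u v ^ q with hSA
  have h2q : (2:ℝ) ^ q = 2 ^ (q - 1) * 2 := by
    rw [← Real.rpow_add_one (by norm_num : (2:ℝ) ≠ 0)]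
    ring_nf
  have hfin : (B.card : ℝ) * SA ≤ (B.card : ℝ) * (2 ^ q * S) := by
    rw [h2q]; nlinarith [hsum]
  exact le_of_mul_le_mul_left hfin hm

theorem stmt_6 {X : Type*} [MetricSpace X] [DecidableEq X] (q : ℝ) (hq : 1 ≤ q)
    (T : Finset X) (k : ℕ) (hk : T.card = k) (hk2 : 2 ≤ k) (hkeven : Even k)
    (hne : (T.powersetCard (k / 2)).Nonempty) :
    (1 / 2 : ℝ) * ∑ u ∈ T, ∑ v ∈ T, dist u v ^ q
      ≤ ((2:ℝ) ^ q + 1) *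
        (T.powersetCard (k / 2)).inf'
          hne (fun L => ∑ l ∈ L, ∑ r ∈ T \ L, dist l r ^ q) := by
  obtain ⟨L, hLmem, hEq⟩ := Finset.exists_mem_eq_inf' hne
    (fun L => ∑ l ∈ L, ∑ r ∈ T \ L, dist l r ^ q)
  rw [hEq]
  rw [Finset.mem_powersetCard] at hLmem
  obtain ⟨hLsub, hLcard⟩ := hLmem
  set R := T \ L with hR
  obtain ⟨m, hmk⟩ := hkeven
  have hRcard : R.card = k / 2 := by
    rw [hR, Finset.card_sdiff_of_subset hLsub, hk, hLcard]
    omega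
  have hRne : R.Nonempty := by
    rw [← Finset.card_pos, hRcard]; omega
  have hLne : L.Nonempty := by
    rw [← Finset.card_pos, hLcard]; omega
  have hcards : L.card = R.card := by rw [hLcard, hRcard]
  -- split sums
  have hsplit : ∀ f : X → ℝ, ∑ u ∈ T, f u = ∑ u ∈ R, f u + ∑ u ∈ L, f u := by
    intro f; rw [hR, Finset.sum_sdiff hLsub]
  have hRL : ∑ u ∈ R, ∑ v ∈ L, dist u v ^ q = ∑ l ∈ L, ∑ r ∈ R, dist l r ^ q := by
    rw [Finset.sum_comm]
    exact Finset.sum_congr rfl fun l _ => Finset.sum_congr rfl fun r _ => by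
      rw [dist_comm]
  have hbig : ∑ u ∈ T, ∑ v ∈ T, dist u v ^ q
      = (∑ u ∈ R, ∑ v ∈ R, dist u v ^ q) + (∑ u ∈ R, ∑ v ∈ L, dist u v ^ q)
        + ((∑ u ∈ L, ∑ v ∈ R, dist u v ^ q) + ∑ u ∈ L, ∑ v ∈ L, dist u v ^ q) := by
    rw [hsplit (fun u => ∑ v ∈ T, dist u v ^ q)]
    congr 1
    · rw [← Finset.sum_add_distrib]
      exact Finset.sum_congr rfl fun u _ => hsplit _
    · rw [← Finset.sum_add_distrib]
      exact Finset.sum_congr rfl fun u _ => hsplit _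
  have hLL : ∑ u ∈ L, ∑ v ∈ L, dist u v ^ q
      ≤ 2 ^ q * ∑ l ∈ L, ∑ r ∈ R, dist l r ^ q := block hq L R hcards hRne
  have hRR : ∑ u ∈ R, ∑ v ∈ R, dist u v ^ q
      ≤ 2 ^ q * ∑ l ∈ L, ∑ r ∈ R, dist l r ^ q := by
    have := block hq R L hcards.symm hLne
    rwa [hRL] at this
  rw [hbig, hRL]
  linarith
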